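/- Fix n, ℓ, δ with 2δ < ℓ ≤ n/2, ℓ | n, and δ+1 ≤ √ℓ. Let X be uniform on {0,1}^n, let 𝒟 = 𝒟_δ(ℓ,n) be the delimiter code (each block except the first starts with δ+1 zeros, each block except the last ends with δ ones), and let L(X) denote the length of the longest run in X. Then P(L(X) > √ℓ and X ∈ 𝒟) ≤ 2^{-r_𝒟} · n · 2^{-(⌈√ℓ⌉ - δ - 2)}, where r_𝒟 = (2δ+1)(n/ℓ - 1) and 2^{-r_𝒟} = P(X ∈ 𝒟). -/

import Mathlib

lemma card_constraint {n : ℕ} (F : Finset (Fin n)) (g : Fin n → Bool) :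
    (Finset.univ.filter (fun x : Fin n → Bool => ∀ j ∈ F, x j = g j)).card ≤ 2 ^ (n - F.card) := by
  classical
  have h2 : Fintype.card ({j : Fin n // j ∉ F} → Bool) = 2 ^ (n - F.card) := by
    rw [Fintype.card_fun, Fintype.card_bool]
    congr 1
    rw [Fintype.card_subtype]
    have he : Finset.filter (fun j => j ∉ F) Finset.univ = Fᶜ := by
      ext j; simp
    rw [he, Finset.card_compl, Fintype.card_fin]
  rw [← h2, ← Finset.card_univ]
  apply Finset.card_le_card_of_injOn (fun x (j : {j : Fin n // j ∉ F}) => x j.1)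
  · intro x _; exact Finset.mem_univ _
  · intro x hx y hy hxy
    simp only [Finset.coe_filter, Set.mem_setOf_eq, Finset.mem_univ, true_and] at hx hy
    funext j
    by_cases hj : j ∈ F
    · rw [hx j hj, hy j hj]
    · exact congrFun hxy ⟨j, hj⟩

open scoped Classical in
/-- For `X` uniform on `{0,1}^n`, the probability that `X` lies in the delimiter code
`𝒟_δ(ℓ,n)` and has a run longer than `√ℓ` is at most
`2^{-r_𝒟} · n · 2^{-(⌈√ℓ⌉ - δ - 2)}` with `r_𝒟 = (2δ+1)(n/ℓ-1)`. -/
theorem stmt12 (n ℓ δ : ℕ) (h1 : 2*δ < ℓ) (h2 : ℓ ≤ n/2) (h3 : ℓ ∣ n)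
    (h4 : (δ:ℝ) + 1 ≤ Real.sqrt ℓ) :
    ((Finset.univ.filter (fun x : Fin n → Bool =>
       (∃ i : Fin n, ∃ s : ℕ, Real.sqrt ℓ < (s:ℝ) ∧ (i:ℕ) + s ≤ n ∧
          ∀ m : Fin n, i ≤ m → (m:ℕ) < (i:ℕ) + s → x m = x i) ∧
       (∀ m : ℕ, 1 ≤ m → m < n/ℓ →
         (∀ j : Fin n, m*ℓ - δ ≤ (j:ℕ) → (j:ℕ) < m*ℓ → x j = true) ∧
         (∀ j : Fin n, m*ℓ ≤ (j:ℕ) → (j:ℕ) ≤ m*ℓ + δ → x j = false)))).card : ℝ) / 2^n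
      ≤ (2:ℝ) ^ (-(((2*δ+1)*(n/ℓ - 1) : ℕ) : ℤ)) * n *
          (2:ℝ) ^ (-(⌈Real.sqrt ℓ⌉ - (δ:ℤ) - 2)) := by
  classical
  have hℓpos : 0 < ℓ := by omega
  obtain ⟨k, hnℓ⟩ : ∃ k, ℓ * k = n := ⟨n / ℓ, Nat.mul_div_cancel' h3⟩
  have hkdiv : n / ℓ = k := by rw [← hnℓ, Nat.mul_div_cancel_left _ hℓpos]
  have hk2 : 2 ≤ k := by
    have h2ℓ : 2 * ℓ ≤ n := by
      have := (Nat.le_div_iff_mul_le (by norm_num : 0 < 2)).mp h2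
      omega
    by_contra hc
    push_neg at hc
    interval_cases k <;> omega
  have hnpos : 0 < n := by omega
  have hsqnn : (0:ℝ) ≤ Real.sqrt ℓ := Real.sqrt_nonneg _
  have hceil1 : (1:ℤ) ≤ ⌈Real.sqrt ℓ⌉ := by
    have : (0:ℝ) < Real.sqrt ℓ := by linarith [h4, Nat.cast_nonneg (α := ℝ) δ]
    exact Int.ceil_pos.mpr this
  obtain ⟨t, hceilt⟩ : ∃ t : ℕ, ⌈Real.sqrt ℓ⌉ = (t:ℤ) :=
    ⟨(⌈Real.sqrt ℓ⌉).toNat, (Int.toNat_of_nonneg (by omega)).symm⟩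
  have hsq : Real.sqrt ℓ * Real.sqrt ℓ = (ℓ:ℝ) := Real.mul_self_sqrt (by positivity)
  have htδ : δ + 1 ≤ t := by
    have h := Int.le_ceil (Real.sqrt ℓ)
    rw [hceilt] at h
    have : (δ:ℝ) + 1 ≤ (t:ℝ) := by push_cast at h ⊢; linarith
    exact_mod_cast this
  have htℓδ : t + δ ≤ ℓ := by
    have hc : ⌈Real.sqrt ℓ⌉ ≤ ((ℓ - δ : ℕ) : ℤ) := by
      apply Int.ceil_le.mpr
      rw [show (((ℓ - δ : ℕ) : ℤ) : ℝ) = (ℓ:ℝ) - δ by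
        push_cast [Nat.cast_sub (show δ ≤ ℓ by omega)]; ring]
      nlinarith [sq_nonneg (Real.sqrt ℓ - 1)]
    rw [hceilt] at hc
    have : t ≤ ℓ - δ := by exact_mod_cast hc
    omega
  -- the delimiter position set and value function
  set D : Finset (Fin n) := Finset.univ.filter (fun j : Fin n =>
      (ℓ - δ ≤ (j:ℕ) % ℓ ∧ (j:ℕ)/ℓ + 1 < k) ∨
      ((j:ℕ) % ℓ ≤ δ ∧ 1 ≤ (j:ℕ)/ℓ ∧ (j:ℕ)/ℓ < k)) with hD
  set f : Fin n → Bool := fun j => decide (ℓ - δ ≤ (j:ℕ) % ℓ) with hf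
  -- a string satisfying the delimiter condition has the prescribed values on D
  have hDval : ∀ (x : Fin n → Bool),
      (∀ m : ℕ, 1 ≤ m → m < n/ℓ →
         (∀ j : Fin n, m*ℓ - δ ≤ (j:ℕ) → (j:ℕ) < m*ℓ → x j = true) ∧
         (∀ j : Fin n, m*ℓ ≤ (j:ℕ) → (j:ℕ) ≤ m*ℓ + δ → x j = false)) →
      ∀ j ∈ D, x j = f j := by
    intro x hx j hj
    rw [hD, Finset.mem_filter] at hj
    obtain ⟨-, hj⟩ := hj
    obtain ⟨q, s, hq, hs, hsl, hqs⟩ :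
        ∃ q s, (j:ℕ)/ℓ = q ∧ (j:ℕ)%ℓ = s ∧ s < ℓ ∧ ℓ*q + s = (j:ℕ) :=
      ⟨(j:ℕ)/ℓ, (j:ℕ)%ℓ, rfl, rfl, Nat.mod_lt _ hℓpos, Nat.div_add_mod _ _⟩
    simp only [hf]
    rw [hq, hs] at hj
    rw [hs]
    obtain ⟨P, hP⟩ : ∃ P, ℓ*q = P := ⟨_, rfl⟩
    rw [hP] at hqs
    rcases hj with ⟨h5, h6⟩ | ⟨h5, h6, h7⟩
    · have hxj := (hx (q + 1) (Nat.succ_le_succ (Nat.zero_le _)) (by rw [hkdiv]; exact h6)).1 j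
        (by rw [show (q+1)*ℓ = P + ℓ by rw [← hP]; ring]; omega)
        (by rw [show (q+1)*ℓ = P + ℓ by rw [← hP]; ring]; omega)
      rw [hxj]
      simp [h5]
    · have hxj := (hx q h6 (by rw [hkdiv]; exact h7)).2 j
        (by rw [show q*ℓ = P by rw [← hP]; ring]; omega)
        (by rw [show q*ℓ = P by rw [← hP]; ring]; omega)
      rw [hxj]
      simp only [decide_eq_false_iff_not, not_le, Bool.false_eq]
      omega
  -- key arithmetic facts about delimiter positions
  have key : ∀ m' a : ℕ, m'+1 < k → a < 2*δ+1 →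
      ((m'+1)*ℓ - δ + a < n) ∧
      (((m'+1)*ℓ - δ + a) + δ) / ℓ = m'+1 ∧ (((m'+1)*ℓ - δ + a) + δ) % ℓ = a ∧
      ((ℓ - δ ≤ ((m'+1)*ℓ - δ + a) % ℓ ∧ ((m'+1)*ℓ - δ + a)/ℓ + 1 < k) ∨
       (((m'+1)*ℓ - δ + a) % ℓ ≤ δ ∧ 1 ≤ ((m'+1)*ℓ - δ + a)/ℓ ∧ ((m'+1)*ℓ - δ + a)/ℓ < k)) := by
    intro m' a hm ha
    have hδℓ : δ < ℓ := by omega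
    rcases Nat.lt_or_ge a δ with hc | hc
    · have hv : (m'+1)*ℓ - δ + a = ℓ*m' + (ℓ - δ + a) := by
        rw [show (m'+1)*ℓ = ℓ*m' + ℓ by ring]
        generalize ℓ*m' = P
        omega
      have hlt : ℓ - δ + a < ℓ := by omega
      have hdiv : (ℓ*m' + (ℓ - δ + a))/ℓ = m' := by
        rw [Nat.mul_add_div hℓpos, Nat.div_eq_of_lt hlt, Nat.add_zero]
      have hmod : (ℓ*m' + (ℓ - δ + a))%ℓ = ℓ - δ + a := by
        rw [Nat.mul_add_mod, Nat.mod_eq_of_lt hlt]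
      have hv2 : (m'+1)*ℓ - δ + a + δ = ℓ*(m'+1) + a := by
        rw [hv, show ℓ*(m'+1) = ℓ*m' + ℓ by ring]
        generalize ℓ*m' = P
        omega
      have ha' : a < ℓ := by omega
      have hdiv2 : (ℓ*(m'+1) + a)/ℓ = m'+1 := by
        rw [Nat.mul_add_div hℓpos, Nat.div_eq_of_lt ha', Nat.add_zero]
      have hmod2 : (ℓ*(m'+1) + a)%ℓ = a := by
        rw [Nat.mul_add_mod, Nat.mod_eq_of_lt ha']
      refine ⟨?_, ?_, ?_, Or.inl ⟨?_, ?_⟩⟩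
      · rw [hv]
        calc ℓ*m' + (ℓ - δ + a) < ℓ*m' + ℓ := by omega
        _ = ℓ*(m'+1) := by ring
        _ ≤ ℓ*k := Nat.mul_le_mul_left _ (by omega)
        _ = n := hnℓ
      · rw [hv2, hdiv2]
      · rw [hv2, hmod2]
      · rw [hv, hmod]; omega
      · rw [hv, hdiv]; omega
    · have h1 : ℓ*1 ≤ ℓ*(m'+1) := Nat.mul_le_mul_left ℓ (by omega)
      rw [mul_one] at h1
      have hv : (m'+1)*ℓ - δ + a = ℓ*(m'+1) + (a - δ) := by
        rw [show (m'+1)*ℓ = ℓ*(m'+1) by ring]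
        generalize hg : ℓ*(m'+1) = P at h1 ⊢
        omega
      have hlt : a - δ < ℓ := by omega
      have hdiv : (ℓ*(m'+1) + (a - δ))/ℓ = m'+1 := by
        rw [Nat.mul_add_div hℓpos, Nat.div_eq_of_lt hlt, Nat.add_zero]
      have hmod : (ℓ*(m'+1) + (a - δ))%ℓ = a - δ := by
        rw [Nat.mul_add_mod, Nat.mod_eq_of_lt hlt]
      have hv2 : (m'+1)*ℓ - δ + a + δ = ℓ*(m'+1) + a := by
        rw [hv]
        generalize ℓ*(m'+1) = P
        omega
      have ha' : a < ℓ := by omega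
      have hdiv2 : (ℓ*(m'+1) + a)/ℓ = m'+1 := by
        rw [Nat.mul_add_div hℓpos, Nat.div_eq_of_lt ha', Nat.add_zero]
      have hmod2 : (ℓ*(m'+1) + a)%ℓ = a := by
        rw [Nat.mul_add_mod, Nat.mod_eq_of_lt ha']
      refine ⟨?_, ?_, ?_, Or.inr ⟨?_, ?_, ?_⟩⟩
      · rw [hv]
        calc ℓ*(m'+1) + (a - δ) < ℓ*(m'+1) + ℓ := by omega
        _ = ℓ*(m'+2) := by ring
        _ ≤ ℓ*k := Nat.mul_le_mul_left _ (by omega)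
        _ = n := hnℓ
      · rw [hv2, hdiv2]
      · rw [hv2, hmod2]
      · rw [hv, hmod]; omega
      · rw [hv, hdiv]; omega
      · rw [hv, hdiv]; omega
  -- lower bound on the number of delimiter positions
  have hDcard : (k-1)*(2*δ+1) ≤ D.card := by
    have hcard : ((Finset.Ico 1 k) ×ˢ (Finset.range (2*δ+1))).card = (k-1)*(2*δ+1) := by
      rw [Finset.card_product, Nat.card_Ico, Finset.card_range]
    rw [← hcard]
    apply Finset.card_le_card_of_injOn
      (fun p => (⟨(p.1*ℓ - δ + p.2) % n, Nat.mod_lt _ hnpos⟩ : Fin n))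
    · rintro ⟨m, a⟩ hp
      simp only [Finset.mem_coe, Finset.mem_product, Finset.mem_Ico, Finset.mem_range] at hp
      obtain ⟨⟨hp1, hp2⟩, hp3⟩ := hp
      obtain ⟨m', rfl⟩ : ∃ m', m = m'+1 := ⟨m - 1, by omega⟩
      obtain ⟨hvn, hdivv, hmodv, hmem⟩ := key m' a hp2 hp3
      rw [hD, Finset.mem_coe, Finset.mem_filter]
      refine ⟨Finset.mem_univ _, ?_⟩
      simpa [Nat.mod_eq_of_lt hvn] using hmem
    · rintro ⟨m1, a1⟩ hp ⟨m2, a2⟩ hq hpq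
      simp only [Finset.coe_product, Set.mem_prod, Finset.mem_coe, Finset.mem_Ico,
        Finset.mem_range] at hp hq
      obtain ⟨⟨hp1, hp2⟩, hp3⟩ := hp
      obtain ⟨⟨hq1, hq2⟩, hq3⟩ := hq
      obtain ⟨m1', rfl⟩ : ∃ m', m1 = m'+1 := ⟨m1 - 1, by omega⟩
      obtain ⟨m2', rfl⟩ : ∃ m', m2 = m'+1 := ⟨m2 - 1, by omega⟩
      obtain ⟨hvn1, hdiv1, hmod1, -⟩ := key m1' a1 hp2 hp3
      obtain ⟨hvn2, hdiv2, hmod2, -⟩ := key m2' a2 hq2 hq3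
      have hveq : (m1'+1)*ℓ - δ + a1 = (m2'+1)*ℓ - δ + a2 := by
        have := congrArg Fin.val hpq
        simpa [Nat.mod_eq_of_lt hvn1, Nat.mod_eq_of_lt hvn2] using this
      have e1 : m1'+1 = m2'+1 := by rw [← hdiv1, ← hdiv2, hveq]
      have e2 : a1 = a2 := by rw [← hmod1, ← hmod2, hveq]
      simp [e1, e2]
  -- abbreviate r
  obtain ⟨r, hr⟩ : ∃ r, (2*δ+1)*(n/ℓ - 1) = r := ⟨_, rfl⟩
  have hrk : r = (2*δ+1)*(k-1) := by rw [← hr, hkdiv]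
  have hDcard' : r ≤ D.card := by
    rw [hrk, Nat.mul_comm]; exact hDcard
  have hrℓ : r + ℓ ≤ n := by
    have h5 : (2*δ+1)*(k-1) ≤ ℓ*(k-1) := Nat.mul_le_mul_right _ (by omega)
    have h6 : ℓ*(k-1) + ℓ = ℓ*k := by
      rw [show ℓ*(k-1) + ℓ = ℓ*(k-1+1) by ring, show k-1+1 = k by omega]
    omega
  have hMn : r + (t - (δ+1)) ≤ n := by omega
  -- interval sets and the bad events
  set I : Fin n → Finset (Fin n) := fun i =>
    Finset.univ.filter (fun j : Fin n => (i:ℕ) ≤ (j:ℕ) ∧ (j:ℕ) < (i:ℕ) + t) with hI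
  set T : Fin n → Bool → Finset (Fin n → Bool) := fun i b => Finset.univ.filter
      (fun x => (∀ j ∈ D, x j = f j) ∧ ∀ j ∈ I i, x j = b) with hT
  have hIcard : ∀ i : Fin n, (i:ℕ) + t ≤ n → (I i).card = t := by
    intro i hi
    rw [← Finset.card_range t]
    apply Finset.card_bij' (fun (j : Fin n) (_ : j ∈ I i) => (j:ℕ) - (i:ℕ))
      (fun (a : ℕ) (ha : a ∈ Finset.range t) => (⟨(i:ℕ) + a, by
        simp only [Finset.mem_range] at ha; omega⟩ : Fin n))
    case hi =>
      intro j hj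
      rw [hI] at hj
      simp only [Finset.mem_filter] at hj
      simp only [Finset.mem_range]
      omega
    case hj =>
      intro a ha
      simp only [Finset.mem_range] at ha
      rw [hI]
      simp only [Finset.mem_filter]
      refine ⟨Finset.mem_univ _, Nat.le_add_right _ _, ?_⟩
      show (i:ℕ) + a < (i:ℕ) + t
      omega
    case left_inv =>
      intro j hj
      rw [hI] at hj
      simp only [Finset.mem_filter] at hj
      apply Fin.ext
      show (i:ℕ) + ((j:ℕ) - (i:ℕ)) = (j:ℕ)
      omega
    case right_inv =>
      intro a ha
      simp only [Finset.mem_range] at ha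
      show (i:ℕ) + a - (i:ℕ) = a
      omega
  -- at most δ+1 delimiter positions can sit in a monochromatic window
  have hID : ∀ (i : Fin n) (b : Bool) (x : Fin n → Bool), x ∈ T i b →
      (D ∩ I i).card ≤ δ + 1 := by
    intro i b x hx
    rw [hT] at hx
    simp only [Finset.mem_filter] at hx
    obtain ⟨-, hxD, hxI⟩ := hx
    have hinj : Set.InjOn (fun j : Fin n => (j:ℕ) % ℓ) (↑(D ∩ I i) : Set (Fin n)) := by
      rintro j1 hj1 j2 hj2 he
      rw [Finset.mem_coe, Finset.mem_inter] at hj1 hj2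
      have hI1 := hj1.2
      have hI2 := hj2.2
      rw [hI] at hI1 hI2
      simp only [Finset.mem_filter] at hI1 hI2
      obtain ⟨-, hle1, hlt1⟩ := hI1
      obtain ⟨-, hle2, hlt2⟩ := hI2
      have he' : (j1:ℕ) % ℓ = (j2:ℕ) % ℓ := he
      obtain ⟨q1, hq1⟩ : ∃ q, ℓ*q + (j1:ℕ)%ℓ = (j1:ℕ) := ⟨_, Nat.div_add_mod _ _⟩
      obtain ⟨q2, hq2⟩ : ∃ q, ℓ*q + (j2:ℕ)%ℓ = (j2:ℕ) := ⟨_, Nat.div_add_mod _ _⟩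
      rcases lt_trichotomy q1 q2 with hq | hq | hq
      · exfalso
        have h7 : ℓ*(q1+1) ≤ ℓ*q2 := Nat.mul_le_mul_left ℓ (by omega)
        rw [show ℓ*(q1+1) = ℓ*q1 + ℓ by ring] at h7
        obtain ⟨P1, hP1⟩ : ∃ P, ℓ*q1 = P := ⟨_, rfl⟩
        obtain ⟨P2, hP2⟩ : ∃ P, ℓ*q2 = P := ⟨_, rfl⟩
        rw [hP1] at hq1 h7
        rw [hP2] at hq2 h7
        omega
      · apply Fin.ext
        subst hq
        omega
      · exfalso
        have h7 : ℓ*(q2+1) ≤ ℓ*q1 := Nat.mul_le_mul_left ℓ (by omega)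
        rw [show ℓ*(q2+1) = ℓ*q2 + ℓ by ring] at h7
        obtain ⟨P1, hP1⟩ : ∃ P, ℓ*q1 = P := ⟨_, rfl⟩
        obtain ⟨P2, hP2⟩ : ∃ P, ℓ*q2 = P := ⟨_, rfl⟩
        rw [hP1] at hq1 h7
        rw [hP2] at hq2 h7
        omega
    have hval : ∀ j ∈ D ∩ I i, x j = b ∧ x j = f j := by
      intro j hj
      rw [Finset.mem_inter] at hj
      exact ⟨hxI j hj.2, hxD j hj.1⟩
    cases b
    · -- b = false : every such position has j % ℓ ≤ δ
      have hmem : ∀ j ∈ D ∩ I i, (fun j : Fin n => (j:ℕ) % ℓ) j ∈ Finset.range (δ+1) := by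
        intro j hj
        obtain ⟨hb, hfj⟩ := hval j hj
        have hfb : f j = false := by rw [← hfj, hb]
        simp only [hf, decide_eq_false_iff_not, not_le] at hfb
        have hDj := (Finset.mem_inter.mp hj).1
        rw [hD, Finset.mem_filter] at hDj
        simp only [Finset.mem_range]
        rcases hDj.2 with ⟨h5, -⟩ | ⟨h5, -⟩ <;> omega
      have := Finset.card_le_card_of_injOn _ hmem hinj
      simpa using this
    · -- b = true : every such position has ℓ - δ ≤ j % ℓ < ℓ
      have hmem : ∀ j ∈ D ∩ I i, (fun j : Fin n => (j:ℕ) % ℓ) j ∈ Finset.Ico (ℓ-δ) ℓ := by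
        intro j hj
        obtain ⟨hb, hfj⟩ := hval j hj
        have hfb : f j = true := by rw [← hfj, hb]
        simp only [hf, decide_eq_true_eq] at hfb
        simp only [Finset.mem_Ico]
        exact ⟨hfb, Nat.mod_lt _ hℓpos⟩
      have := Finset.card_le_card_of_injOn _ hmem hinj
      rw [Nat.card_Ico] at this
      omega
  -- cardinality of each bad event
  have hTcard : ∀ (i : Fin n) (b : Bool), (i:ℕ) + t ≤ n →
      (T i b).card ≤ 2 ^ (n - (r + (t - (δ+1)))) := by
    intro i b hi
    rcases Finset.eq_empty_or_nonempty (T i b) with he | ⟨x0, hx0⟩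
    · rw [he]; simp
    · have hIDc := hID i b x0 hx0
      have hIc := hIcard i hi
      have hsub : T i b ⊆ Finset.univ.filter
          (fun x => ∀ j ∈ D ∪ I i, x j = (if j ∈ D then f j else b)) := by
        intro x hx
        rw [hT] at hx
        simp only [Finset.mem_filter] at hx
        obtain ⟨-, hxD, hxI⟩ := hx
        rw [Finset.mem_filter]
        refine ⟨Finset.mem_univ _, ?_⟩
        intro j hj
        rw [Finset.mem_union] at hj
        by_cases hjD : j ∈ D
        · simp only [hjD, if_true]; exact hxD j hjD
        · simp only [hjD, if_false]
          exact hxI j (hj.resolve_left hjD)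
      have hb := card_constraint (D ∪ I i) (fun j => if j ∈ D then f j else b)
      have hcup : r + (t - (δ+1)) ≤ (D ∪ I i).card := by
        have h7 := Finset.card_union_add_card_inter D (I i)
        clear hb hsub hx0
        omega
      calc (T i b).card ≤ _ := Finset.card_le_card hsub
      _ ≤ 2 ^ (n - (D ∪ I i).card) := hb
      _ ≤ 2 ^ (n - (r + (t - (δ+1)))) :=
        Nat.pow_le_pow_right (by norm_num) (Nat.sub_le_sub_left hcup n)
  -- the bad set
  set SS := Finset.univ.filter (fun x : Fin n → Bool =>
       (∃ i : Fin n, ∃ s : ℕ, Real.sqrt ℓ < (s:ℝ) ∧ (i:ℕ) + s ≤ n ∧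
          ∀ m : Fin n, i ≤ m → (m:ℕ) < (i:ℕ) + s → x m = x i) ∧
       (∀ m : ℕ, 1 ≤ m → m < n/ℓ →
         (∀ j : Fin n, m*ℓ - δ ≤ (j:ℕ) → (j:ℕ) < m*ℓ → x j = true) ∧
         (∀ j : Fin n, m*ℓ ≤ (j:ℕ) → (j:ℕ) ≤ m*ℓ + δ → x j = false))) with hSS
  set idx := (Finset.univ.filter (fun i : Fin n => (i:ℕ) + t ≤ n)) ×ˢ
    (Finset.univ : Finset Bool) with hidx
  have hsubS : SS ⊆ idx.biUnion (fun p => T p.1 p.2) := by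
    intro x hx
    rw [hSS, Finset.mem_filter] at hx
    obtain ⟨-, ⟨i, s, hs1, hs2, hconst⟩, hdelim⟩ := hx
    have hts : t ≤ s := by
      have h5 : Real.sqrt ℓ ≤ (s:ℝ) := le_of_lt hs1
      have hc : ⌈Real.sqrt ℓ⌉ ≤ (s:ℤ) := Int.ceil_le.mpr (by exact_mod_cast h5)
      rw [hceilt] at hc
      exact_mod_cast hc
    rw [Finset.mem_biUnion]
    refine ⟨(i, x i), ?_, ?_⟩
    · rw [hidx, Finset.mem_product, Finset.mem_filter]
      exact ⟨⟨Finset.mem_univ _, by show (i:ℕ) + t ≤ n; omega⟩, Finset.mem_univ _⟩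
    · rw [hT]
      simp only [Finset.mem_filter]
      refine ⟨Finset.mem_univ _, hDval x hdelim, ?_⟩
      intro j hj
      rw [hI] at hj
      simp only [Finset.mem_filter] at hj
      exact hconst j hj.2.1 (by omega)
  have hcount : SS.card ≤ n * 2 * 2 ^ (n - (r + (t - (δ+1)))) := by
    calc SS.card ≤ (idx.biUnion (fun p => T p.1 p.2)).card := Finset.card_le_card hsubS
    _ ≤ ∑ p ∈ idx, (T p.1 p.2).card := Finset.card_biUnion_le
    _ ≤ idx.card * 2 ^ (n - (r + (t - (δ+1)))) := by
        rw [← smul_eq_mul]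
        apply Finset.sum_le_card_nsmul
        intro p hp
        rw [hidx, Finset.mem_product, Finset.mem_filter] at hp
        exact hTcard p.1 p.2 hp.1.2
    _ ≤ n * 2 * 2 ^ (n - (r + (t - (δ+1)))) := by
        apply Nat.mul_le_mul_right
        rw [hidx, Finset.card_product]
        have hle : (Finset.univ.filter (fun i : Fin n => (i:ℕ) + t ≤ n)).card ≤ n := by
          calc _ ≤ (Finset.univ : Finset (Fin n)).card := Finset.card_filter_le _ _
          _ = n := by simp
        have hbool : (Finset.univ : Finset Bool).card = 2 := by simp
        rw [hbool]
        omega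
  -- final real computation
  rw [hceilt, hr]
  have h2n : (0:ℝ) < 2^n := by positivity
  rw [div_le_iff₀ h2n]
  have hpow : (2:ℝ)^(((n - (r + (t - (δ+1))) : ℕ)):ℤ) * (2:ℝ)^(1:ℤ)
      = (2:ℝ)^(-(r:ℤ)) * (2:ℝ)^(-((t:ℤ)-(δ:ℤ)-2)) * (2:ℝ)^((n:ℤ)) := by
    rw [← zpow_add₀ (by norm_num : (2:ℝ) ≠ 0), ← zpow_add₀ (by norm_num : (2:ℝ) ≠ 0),
      ← zpow_add₀ (by norm_num : (2:ℝ) ≠ 0)]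
    congr 1
    omega
  rw [zpow_one, zpow_natCast] at hpow
  calc (SS.card : ℝ) ≤ ((n * 2 * 2 ^ (n - (r + (t - (δ+1)))) : ℕ) : ℝ) := by
        exact_mod_cast hcount
  _ = (2:ℝ)^(-(r:ℤ)) * n * (2:ℝ)^(-((t:ℤ)-(δ:ℤ)-2)) * 2^n := by
      push_cast
      rw [show ((2:ℝ)^n) = (2:ℝ)^((n:ℤ)) from (zpow_natCast _ _).symm]
      linear_combination (n:ℝ) * hpow
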